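/- arXiv:2002.12363 — 2 statements merged into one kernel-verified Lean document; each statement's English description precedes it below -/
import Mathlib

section
/- Completion-of-squares identity for the social cost (deterministic finite-horizon version, N agents): suppose P(t), Π(t) are symmetric matrix functions solving the differential Riccati equations ρP = Ṗ + AᵀP + PA + Q − PBR⁻¹BᵀP with P(T)=0 and ρΠ = Π̇ + (A+G)ᵀΠ + Π(A+G) − ΠBR⁻¹BᵀΠ + (I−Γ)ᵀQ(I−Γ) with Π(T)=0. Let y_i solve ẏ_i = A y_i + G y⁽ᴺ⁾ + B u_i, y_i(0)=0, with y⁽ᴺ⁾ = (1/N)∑ y_j. Then ∑_{i=1}^N ∫₀^T e^{−ρt}(‖y_i − Γy⁽ᴺ⁾‖²_Q + ‖u_i‖²_R) dt = ∑_{i=1}^N ∫₀^T e^{−ρt}(‖u_i − u⁽ᴺ⁾ + R⁻¹BᵀP(y_i − y⁽ᴺ⁾)‖²_R + ‖u⁽ᴺ⁾ + R⁻¹BᵀΠ y⁽ᴺ⁾‖²_R) dt. -/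
attribute [local instance] Matrix.normedAddCommGroup Matrix.normedSpace

open Matrix MeasureTheory intervalIntegral BigOperators

section aux
variable {a b : Type*} [Fintype a] [Fintype b]

lemma mv_sum {ι : Type*} (M : Matrix a b ℝ) (s : Finset ι) (f : ι → b → ℝ) :
    M *ᵥ (∑ j ∈ s, f j) = ∑ j ∈ s, M *ᵥ f j := by
  ext i
  simp [Matrix.mulVec, dotProduct, Finset.mul_sum]
  rw [Finset.sum_comm]

lemma dot_swap (x : a → ℝ) (M : Matrix a b ℝ) (yv : b → ℝ) :
    x ⬝ᵥ M *ᵥ yv = yv ⬝ᵥ Mᵀ *ᵥ x := by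
  simp only [dotProduct, Matrix.mulVec, Matrix.transpose_apply, Finset.mul_sum]
  rw [Finset.sum_comm]
  exact Finset.sum_congr rfl fun j _ => Finset.sum_congr rfl fun i _ => by ring

lemma mv_dot (M : Matrix a b ℝ) (xv : b → ℝ) (c : a → ℝ) :
    (M *ᵥ xv) ⬝ᵥ c = xv ⬝ᵥ Mᵀ *ᵥ c := by
  rw [dotProduct_comm, dot_swap]

lemma hasDerivAt_coord {ι : Type*} [Fintype ι] {E : ι → Type*}
    [∀ i, NormedAddCommGroup (E i)] [∀ i, NormedSpace ℝ (E i)]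
    {f : ℝ → ∀ i, E i} {f' : ∀ i, E i} {t : ℝ}
    (hf : HasDerivAt f f' t) (i : ι) :
    HasDerivAt (fun s => f s i) (f' i) t := by
  exact (ContinuousLinearMap.proj (R := ℝ) (φ := E) i).hasFDerivAt.comp_hasDerivAt t hf

lemma hasDerivAt_entry {M : ℝ → Matrix a b ℝ} {M' : Matrix a b ℝ} {t : ℝ}
    (hM : HasDerivAt M M' t) (i : a) (j : b) :
    HasDerivAt (fun s => M s i j) (M' i j) t :=
  hasDerivAt_coord (hasDerivAt_coord hM i) j

lemma hasDerivAt_dotmv {g : ℝ → a → ℝ} {g' : a → ℝ} {M : ℝ → Matrix a b ℝ}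
    {M' : Matrix a b ℝ} {f : ℝ → b → ℝ} {f' : b → ℝ} {t : ℝ}
    (hg : HasDerivAt g g' t) (hM : HasDerivAt M M' t) (hf : HasDerivAt f f' t) :
    HasDerivAt (fun s => g s ⬝ᵥ (M s) *ᵥ (f s))
      (g' ⬝ᵥ (M t) *ᵥ (f t) + g t ⬝ᵥ M' *ᵥ (f t) + g t ⬝ᵥ (M t) *ᵥ f') t := by
  have h : ∀ s, g s ⬝ᵥ (M s) *ᵥ (f s) = ∑ i, ∑ j, g s i * (M s i j * f s j) := by
    intro s; simp [dotProduct, Matrix.mulVec, Finset.mul_sum]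
  have hd : HasDerivAt (fun s => ∑ i, ∑ j, g s i * (M s i j * f s j))
      (∑ i, ∑ j, (g' i * (M t i j * f t j) +
        g t i * (M' i j * f t j + M t i j * f' j))) t := by
    refine HasDerivAt.fun_sum fun i _ => HasDerivAt.fun_sum fun j _ => ?_
    exact (hasDerivAt_coord hg i).mul ((hasDerivAt_entry hM i j).mul (hasDerivAt_coord hf j))
  have hde : g' ⬝ᵥ M t *ᵥ f t + g t ⬝ᵥ M' *ᵥ f t + g t ⬝ᵥ M t *ᵥ f' =
      ∑ i, ∑ j, (g' i * (M t i j * f t j) +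
        g t i * (M' i j * f t j + M t i j * f' j)) := by
    simp only [dotProduct, Matrix.mulVec, Finset.mul_sum, mul_add, Finset.sum_add_distrib]
    ring
  rw [funext h, hde]
  exact hd

lemma sum_dot {ι : Type*} (s : Finset ι) (f : ι → a → ℝ) (c : a → ℝ) :
    ∑ i ∈ s, (f i ⬝ᵥ c) = (∑ i ∈ s, f i) ⬝ᵥ c := by
  simp only [dotProduct, Finset.sum_apply, Finset.sum_mul]
  exact Finset.sum_comm

lemma dot_sum {ι : Type*} (s : Finset ι) (c : a → ℝ) (f : ι → a → ℝ) :
    ∑ i ∈ s, (c ⬝ᵥ f i) = c ⬝ᵥ (∑ i ∈ s, f i) := by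
  simp only [dotProduct, Finset.sum_apply, Finset.mul_sum]
  exact Finset.sum_comm

lemma sum_quad_split {N : ℕ} (M : Matrix a a ℝ) (d : Fin N → a → ℝ)
    (hd : ∑ i, d i = 0) (w : a → ℝ) :
    ∑ i, ((d i + w) ⬝ᵥ M *ᵥ (d i + w))
      = (∑ i, d i ⬝ᵥ M *ᵥ d i) + (N : ℝ) * (w ⬝ᵥ M *ᵥ w) := by
  have h1 : ∀ i : Fin N, (d i + w) ⬝ᵥ M *ᵥ (d i + w)
      = d i ⬝ᵥ M *ᵥ d i + (d i ⬝ᵥ M *ᵥ w + (w ⬝ᵥ M *ᵥ d i + w ⬝ᵥ M *ᵥ w)) := by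
    intro i
    simp only [Matrix.mulVec_add, dotProduct_add, add_dotProduct]
    ring
  rw [Finset.sum_congr rfl fun i _ => h1 i]
  rw [Finset.sum_add_distrib, Finset.sum_add_distrib, Finset.sum_add_distrib]
  rw [sum_dot Finset.univ d (M *ᵥ w), hd,
    dot_sum Finset.univ w (fun i => M *ᵥ d i), ← mv_sum, hd]
  simp [Finset.sum_const, Finset.card_univ, nsmul_eq_mul]

end aux

lemma key_pointwise {n r : ℕ} (ρ : ℝ) (A0 Q0 : Matrix (Fin n) (Fin n) ℝ)
    (B : Matrix (Fin n) (Fin r) ℝ) (R : Matrix (Fin r) (Fin r) ℝ)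
    (hRR : R * R⁻¹ = 1) (hRiR : R⁻¹ * R = 1) (hRiT : R⁻¹ᵀ = R⁻¹) (hRT : Rᵀ = R)
    (P P' : Matrix (Fin n) (Fin n) ℝ) (hPs : Pᵀ = P)
    (hric : ρ • P = P' + A0ᵀ * P + P * A0 + Q0 - P * B * R⁻¹ * Bᵀ * P)
    (x : Fin n → ℝ) (s : Fin r → ℝ) :
    (-ρ) * (x ⬝ᵥ P *ᵥ x) +
      ((A0 *ᵥ x + B *ᵥ s) ⬝ᵥ P *ᵥ x + x ⬝ᵥ P' *ᵥ x + x ⬝ᵥ P *ᵥ (A0 *ᵥ x + B *ᵥ s))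
    = (s + (R⁻¹ * Bᵀ * P) *ᵥ x) ⬝ᵥ R *ᵥ (s + (R⁻¹ * Bᵀ * P) *ᵥ x)
      - (x ⬝ᵥ Q0 *ᵥ x + s ⬝ᵥ R *ᵥ s) := by
  have hP' : P' = ρ • P - A0ᵀ * P - P * A0 - Q0 + P * B * R⁻¹ * Bᵀ * P := by
    rw [hric]; abel
  have c1 : ∀ (Z : Matrix (Fin r) (Fin n) ℝ), R * (R⁻¹ * Z) = Z := by
    intro Z; rw [← Matrix.mul_assoc, hRR, Matrix.one_mul]
  have c2 : ∀ (Z : Matrix (Fin r) (Fin n) ℝ), R⁻¹ * (R * Z) = Z := by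
    intro Z; rw [← Matrix.mul_assoc, hRiR, Matrix.one_mul]
  have hswap : ∀ (M : Matrix (Fin n) (Fin r) ℝ), x ⬝ᵥ M *ᵥ s = s ⬝ᵥ Mᵀ *ᵥ x :=
    fun M => dot_swap x M s
  rw [hP']
  simp only [Matrix.add_mulVec, Matrix.sub_mulVec, Matrix.smul_mulVec,
    Matrix.mulVec_add, Matrix.mulVec_mulVec, dotProduct_add, add_dotProduct,
    dotProduct_sub, sub_dotProduct, dotProduct_smul, smul_dotProduct, smul_eq_mul,
    mv_dot, Matrix.transpose_mul, Matrix.transpose_transpose, hPs, hRiT, hRT,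
    Matrix.mul_assoc, c1, c2, hRR, hRiR, Matrix.mul_one, Matrix.one_mul, hswap]
  ring

theorem completion_of_squares_social_cost
    (n r N : ℕ) (ρ T : ℝ) (hT : 0 < T)
    (A G Γ Q : Matrix (Fin n) (Fin n) ℝ) (hQ : Q.IsSymm)
    (B : Matrix (Fin n) (Fin r) ℝ) (R : Matrix (Fin r) (Fin r) ℝ)
    (hR : R.PosDef) (hRs : R.IsSymm)
    (P Pi : ℝ → Matrix (Fin n) (Fin n) ℝ)
    (P' Pi' : ℝ → Matrix (Fin n) (Fin n) ℝ)
    (hPderiv : ∀ t, HasDerivAt P (P' t) t)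
    (hPiDeriv : ∀ t, HasDerivAt Pi (Pi' t) t)
    (hPsymm : ∀ t, (P t).IsSymm) (hPiSymm : ∀ t, (Pi t).IsSymm)
    (hPric : ∀ t, ρ • P t = P' t + Aᵀ * P t + P t * A + Q - P t * B * R⁻¹ * Bᵀ * P t)
    (hPT : P T = 0)
    (hPiric : ∀ t, ρ • Pi t = Pi' t + (A + G)ᵀ * Pi t + Pi t * (A + G)
        - Pi t * B * R⁻¹ * Bᵀ * Pi t + (1 - Γ)ᵀ * Q * (1 - Γ))
    (hPiT : Pi T = 0)
    (u : Fin N → ℝ → (Fin r → ℝ)) (hu : ∀ i, Continuous (u i))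
    (y : Fin N → ℝ → (Fin n → ℝ))
    (yN : ℝ → (Fin n → ℝ)) (hyN : ∀ t, yN t = (N : ℝ)⁻¹ • ∑ j, y j t)
    (uN : ℝ → (Fin r → ℝ)) (huN : ∀ t, uN t = (N : ℝ)⁻¹ • ∑ j, u j t)
    (hyode : ∀ i t, HasDerivAt (y i)
        (A.mulVec (y i t) + G.mulVec (yN t) + B.mulVec (u i t)) t)
    (hy0 : ∀ i, y i 0 = 0) :
    ∑ i, ∫ t in (0:ℝ)..T, Real.exp (-ρ * t) *
        ((y i t - Γ.mulVec (yN t)) ⬝ᵥ Q.mulVec (y i t - Γ.mulVec (yN t))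
          + (u i t) ⬝ᵥ R.mulVec (u i t))
      = ∑ i, ∫ t in (0:ℝ)..T, Real.exp (-ρ * t) *
        ((u i t - uN t + (R⁻¹ * Bᵀ * P t).mulVec (y i t - yN t)) ⬝ᵥ
            R.mulVec (u i t - uN t + (R⁻¹ * Bᵀ * P t).mulVec (y i t - yN t))
          + (uN t + (R⁻¹ * Bᵀ * Pi t).mulVec (yN t)) ⬝ᵥ
            R.mulVec (uN t + (R⁻¹ * Bᵀ * Pi t).mulVec (yN t))) := by
  rcases Nat.eq_zero_or_pos N with hN0 | hNpos
  · subst hN0; simp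
  have hNne : (N:ℝ) ≠ 0 := Nat.cast_ne_zero.mpr hNpos.ne'
  -- facts about R
  have hRdet : IsUnit R.det := hR.det_pos.ne'.isUnit
  have hRR : R * R⁻¹ = 1 := Matrix.mul_nonsing_inv R hRdet
  have hRiR : R⁻¹ * R = 1 := Matrix.nonsing_inv_mul R hRdet
  have hRT : Rᵀ = R := hRs
  have hRiT : R⁻¹ᵀ = R⁻¹ := by rw [Matrix.transpose_nonsing_inv, hRT]
  -- continuity
  have hyc : ∀ i, Continuous (y i) :=
    fun i => continuous_iff_continuousAt.mpr fun t => (hyode i t).continuousAt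
  have hPc : Continuous P := continuous_iff_continuousAt.mpr fun t => (hPderiv t).continuousAt
  have hPic : Continuous Pi := continuous_iff_continuousAt.mpr fun t => (hPiDeriv t).continuousAt
  have hyNc : Continuous yN := by
    rw [funext hyN]
    exact (continuous_finset_sum _ fun j _ => hyc j).fun_const_smul _
  have huNc : Continuous uN := by
    rw [funext huN]
    exact (continuous_finset_sum _ fun j _ => hu j).fun_const_smul _
  have expc : Continuous fun t => Real.exp (-ρ * t) :=
    Real.continuous_exp.comp (continuous_const.mul continuous_id)
  -- sums
  have hsumy : ∀ t, ∑ j, y j t = (N:ℝ) • yN t := fun t => by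
    rw [hyN t, smul_smul, mul_inv_cancel₀ hNne, one_smul]
  have hsumu : ∀ t, ∑ j, u j t = (N:ℝ) • uN t := fun t => by
    rw [huN t, smul_smul, mul_inv_cancel₀ hNne, one_smul]
  have hyN0 : yN 0 = 0 := by rw [hyN]; simp [hy0]
  have hesum : ∀ t, ∑ j, (y j t - yN t) = 0 := fun t => by
    rw [Finset.sum_sub_distrib, hsumy t, Finset.sum_const, Finset.card_univ,
      Fintype.card_fin, Nat.cast_smul_eq_nsmul (R := ℝ) N (yN t)]
    exact sub_self _
  have hvsum : ∀ t, ∑ j, (u j t - uN t) = 0 := fun t => by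
    rw [Finset.sum_sub_distrib, hsumu t, Finset.sum_const, Finset.card_univ,
      Fintype.card_fin, Nat.cast_smul_eq_nsmul (R := ℝ) N (uN t)]
    exact sub_self _
  -- ODE for yN
  have hyNd : ∀ t, HasDerivAt yN ((A + G) *ᵥ yN t + B *ᵥ uN t) t := by
    intro t
    have base : HasDerivAt (fun s => (N:ℝ)⁻¹ • ∑ j, y j s)
        ((N:ℝ)⁻¹ • ∑ j, (A *ᵥ y j t + G *ᵥ yN t + B *ᵥ u j t)) t :=
      (HasDerivAt.fun_sum fun j _ => hyode j t).fun_const_smul _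
    have hfun : yN =ᶠ[nhds t] fun s => (N:ℝ)⁻¹ • ∑ j, y j s :=
      Filter.Eventually.of_forall hyN
    have : HasDerivAt yN ((N:ℝ)⁻¹ • ∑ j, (A *ᵥ y j t + G *ᵥ yN t + B *ᵥ u j t)) t :=
      base.congr_of_eventuallyEq hfun
    convert this using 1
    rw [Finset.sum_add_distrib, Finset.sum_add_distrib, ← mv_sum A, ← mv_sum B,
      hsumy t, hsumu t, Finset.sum_const, Finset.card_univ, Fintype.card_fin,
      Matrix.mulVec_smul, Matrix.mulVec_smul, Matrix.add_mulVec]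
    simp only [smul_add, ← Nat.cast_smul_eq_nsmul (R := ℝ), smul_smul,
      inv_mul_cancel₀ hNne, one_smul]
  -- ODE for e i
  have hed : ∀ i t, HasDerivAt (fun s => y i s - yN s)
      (A *ᵥ (y i t - yN t) + B *ᵥ (u i t - uN t)) t := by
    intro i t
    have h := (hyode i t).fun_sub (hyNd t)
    refine h.congr_deriv ?_
    simp only [Matrix.mulVec_sub, Matrix.add_mulVec]
    abel
  -- continuity of integrands
  have hcl : ∀ i : Fin N, Continuous fun t => Real.exp (-ρ * t) *
      ((y i t - Γ.mulVec (yN t)) ⬝ᵥ Q.mulVec (y i t - Γ.mulVec (yN t))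
        + (u i t) ⬝ᵥ R.mulVec (u i t)) := by
    intro i
    apply expc.mul
    exact ((((hyc i).sub (continuous_const.matrix_mulVec hyNc)).dotProduct
      (continuous_const.matrix_mulVec ((hyc i).sub (continuous_const.matrix_mulVec hyNc)))).add
      ((hu i).dotProduct (continuous_const.matrix_mulVec (hu i))))
  have hcr : ∀ i : Fin N, Continuous fun t => Real.exp (-ρ * t) *
      ((u i t - uN t + (R⁻¹ * Bᵀ * P t).mulVec (y i t - yN t)) ⬝ᵥ
          R.mulVec (u i t - uN t + (R⁻¹ * Bᵀ * P t).mulVec (y i t - yN t))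
        + (uN t + (R⁻¹ * Bᵀ * Pi t).mulVec (yN t)) ⬝ᵥ
          R.mulVec (uN t + (R⁻¹ * Bᵀ * Pi t).mulVec (yN t))) := by
    intro i
    apply expc.mul
    have h1 : Continuous fun t => u i t - uN t + (R⁻¹ * Bᵀ * P t).mulVec (y i t - yN t) :=
      ((hu i).sub huNc).add ((continuous_const.matrix_mul hPc).matrix_mulVec ((hyc i).sub hyNc))
    have h2 : Continuous fun t => uN t + (R⁻¹ * Bᵀ * Pi t).mulVec (yN t) :=
      huNc.add ((continuous_const.matrix_mul hPic).matrix_mulVec hyNc)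
    exact (h1.dotProduct (continuous_const.matrix_mulVec h1)).add
      (h2.dotProduct (continuous_const.matrix_mulVec h2))
  -- the Lyapunov-type function
  set F : ℝ → ℝ := fun t => Real.exp (-ρ * t) *
    ((∑ i, (y i t - yN t) ⬝ᵥ (P t).mulVec (y i t - yN t))
      + (N:ℝ) * (yN t ⬝ᵥ (Pi t).mulVec (yN t))) with hFdef
  have hexp : ∀ t : ℝ, HasDerivAt (fun s => Real.exp (-ρ * s)) (-ρ * Real.exp (-ρ * t)) t := by
    intro t
    have h := ((hasDerivAt_id t).const_mul (-ρ)).exp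
    simpa [mul_comm] using h
  have hFd : ∀ t : ℝ, HasDerivAt F
      ((∑ i, Real.exp (-ρ * t) *
        ((u i t - uN t + (R⁻¹ * Bᵀ * P t).mulVec (y i t - yN t)) ⬝ᵥ
            R.mulVec (u i t - uN t + (R⁻¹ * Bᵀ * P t).mulVec (y i t - yN t))
          + (uN t + (R⁻¹ * Bᵀ * Pi t).mulVec (yN t)) ⬝ᵥ
            R.mulVec (uN t + (R⁻¹ * Bᵀ * Pi t).mulVec (yN t))))
       - ∑ i, Real.exp (-ρ * t) *
        ((y i t - Γ.mulVec (yN t)) ⬝ᵥ Q.mulVec (y i t - Γ.mulVec (yN t))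
          + (u i t) ⬝ᵥ R.mulVec (u i t))) t := by
    intro t
    have hS : HasDerivAt (fun s => (∑ i, (y i s - yN s) ⬝ᵥ (P s).mulVec (y i s - yN s))
        + (N:ℝ) * (yN s ⬝ᵥ (Pi s).mulVec (yN s)))
        ((∑ i, ((A *ᵥ (y i t - yN t) + B *ᵥ (u i t - uN t)) ⬝ᵥ (P t) *ᵥ (y i t - yN t)
            + (y i t - yN t) ⬝ᵥ (P' t) *ᵥ (y i t - yN t)
            + (y i t - yN t) ⬝ᵥ (P t) *ᵥ (A *ᵥ (y i t - yN t) + B *ᵥ (u i t - uN t))))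
          + (N:ℝ) * (((A + G) *ᵥ yN t + B *ᵥ uN t) ⬝ᵥ (Pi t) *ᵥ yN t
            + yN t ⬝ᵥ (Pi' t) *ᵥ yN t
            + yN t ⬝ᵥ (Pi t) *ᵥ ((A + G) *ᵥ yN t + B *ᵥ uN t))) t :=
      (HasDerivAt.fun_sum fun i _ => hasDerivAt_dotmv (hed i t) (hPderiv t) (hed i t)).add
        ((hasDerivAt_dotmv (hyNd t) (hPiDeriv t) (hyNd t)).const_mul _)
    rw [hFdef]
    refine ((hexp t).mul hS).congr_deriv ?_
    -- pointwise completion-of-squares identity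
    have hkey := fun i : Fin N => key_pointwise ρ A Q B R hRR hRiR hRiT hRT
      (P t) (P' t) (hPsymm t) (hPric t) (y i t - yN t) (u i t - uN t)
    have havg := key_pointwise ρ (A + G) ((1 - Γ)ᵀ * Q * (1 - Γ)) B R hRR hRiR hRiT hRT
      (Pi t) (Pi' t) (hPiSymm t) (by rw [hPiric t]; abel) (yN t) (uN t)
    have horthQ : ∑ i, (y i t - Γ *ᵥ yN t) ⬝ᵥ Q *ᵥ (y i t - Γ *ᵥ yN t)
        = (∑ i, (y i t - yN t) ⬝ᵥ Q *ᵥ (y i t - yN t))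
          + (N:ℝ) * (yN t ⬝ᵥ ((1 - Γ)ᵀ * Q * (1 - Γ)) *ᵥ yN t) := by
      have h1 : ∀ i : Fin N, y i t - Γ *ᵥ yN t = (y i t - yN t) + (1 - Γ) *ᵥ yN t := by
        intro i; rw [Matrix.sub_mulVec, Matrix.one_mulVec]; abel
      have hc : ((1 - Γ) *ᵥ yN t) ⬝ᵥ Q *ᵥ ((1 - Γ) *ᵥ yN t)
          = yN t ⬝ᵥ ((1 - Γ)ᵀ * Q * (1 - Γ)) *ᵥ yN t := by
        rw [mv_dot, Matrix.mulVec_mulVec, Matrix.mulVec_mulVec]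
      calc ∑ i, (y i t - Γ *ᵥ yN t) ⬝ᵥ Q *ᵥ (y i t - Γ *ᵥ yN t)
          = ∑ i, ((y i t - yN t) + (1 - Γ) *ᵥ yN t) ⬝ᵥ Q *ᵥ ((y i t - yN t) + (1 - Γ) *ᵥ yN t) := by
            exact Finset.sum_congr rfl fun i _ => by rw [← h1 i]
        _ = (∑ i, (y i t - yN t) ⬝ᵥ Q *ᵥ (y i t - yN t))
            + (N:ℝ) * (((1 - Γ) *ᵥ yN t) ⬝ᵥ Q *ᵥ ((1 - Γ) *ᵥ yN t)) :=
            sum_quad_split Q _ (hesum t) _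
        _ = _ := by rw [hc]
    have horthR : ∑ i, (u i t) ⬝ᵥ R *ᵥ (u i t)
        = (∑ i, (u i t - uN t) ⬝ᵥ R *ᵥ (u i t - uN t))
          + (N:ℝ) * (uN t ⬝ᵥ R *ᵥ uN t) := by
      have h2 := sum_quad_split R (fun i => u i t - uN t) (hvsum t) (uN t)
      simpa using h2
    have hkeysum : ∑ i, ((-ρ) * ((y i t - yN t) ⬝ᵥ (P t) *ᵥ (y i t - yN t))
          + ((A *ᵥ (y i t - yN t) + B *ᵥ (u i t - uN t)) ⬝ᵥ (P t) *ᵥ (y i t - yN t)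
            + (y i t - yN t) ⬝ᵥ (P' t) *ᵥ (y i t - yN t)
            + (y i t - yN t) ⬝ᵥ (P t) *ᵥ (A *ᵥ (y i t - yN t) + B *ᵥ (u i t - uN t))))
        = (∑ i, (u i t - uN t + (R⁻¹ * Bᵀ * P t) *ᵥ (y i t - yN t)) ⬝ᵥ
              R *ᵥ (u i t - uN t + (R⁻¹ * Bᵀ * P t) *ᵥ (y i t - yN t)))
          - ∑ i, ((y i t - yN t) ⬝ᵥ Q *ᵥ (y i t - yN t)
            + (u i t - uN t) ⬝ᵥ R *ᵥ (u i t - uN t)) := by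
      rw [← Finset.sum_sub_distrib]
      exact Finset.sum_congr rfl fun i _ => hkey i
    -- now pure scalar algebra
    have h3 : ∑ i, ((-ρ) * ((y i t - yN t) ⬝ᵥ (P t) *ᵥ (y i t - yN t))
          + ((A *ᵥ (y i t - yN t) + B *ᵥ (u i t - uN t)) ⬝ᵥ (P t) *ᵥ (y i t - yN t)
            + (y i t - yN t) ⬝ᵥ (P' t) *ᵥ (y i t - yN t)
            + (y i t - yN t) ⬝ᵥ (P t) *ᵥ (A *ᵥ (y i t - yN t) + B *ᵥ (u i t - uN t))))
        = (-ρ) * (∑ i, (y i t - yN t) ⬝ᵥ (P t) *ᵥ (y i t - yN t))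
          + ∑ i, ((A *ᵥ (y i t - yN t) + B *ᵥ (u i t - uN t)) ⬝ᵥ (P t) *ᵥ (y i t - yN t)
            + (y i t - yN t) ⬝ᵥ (P' t) *ᵥ (y i t - yN t)
            + (y i t - yN t) ⬝ᵥ (P t) *ᵥ (A *ᵥ (y i t - yN t) + B *ᵥ (u i t - uN t))) := by
      rw [Finset.sum_add_distrib, Finset.mul_sum]
    have h4 : ∑ i, ((y i t - yN t) ⬝ᵥ Q *ᵥ (y i t - yN t)
          + (u i t - uN t) ⬝ᵥ R *ᵥ (u i t - uN t))
        = (∑ i, (y i t - yN t) ⬝ᵥ Q *ᵥ (y i t - yN t))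
          + ∑ i, (u i t - uN t) ⬝ᵥ R *ᵥ (u i t - uN t) := Finset.sum_add_distrib
    have hSSA : (∑ i, (u i t - uN t + (R⁻¹ * Bᵀ * P t) *ᵥ (y i t - yN t)) ⬝ᵥ
          R *ᵥ (u i t - uN t + (R⁻¹ * Bᵀ * P t) *ᵥ (y i t - yN t)))
        = (-ρ) * (∑ i, (y i t - yN t) ⬝ᵥ (P t) *ᵥ (y i t - yN t))
          + (∑ i, ((A *ᵥ (y i t - yN t) + B *ᵥ (u i t - uN t)) ⬝ᵥ (P t) *ᵥ (y i t - yN t)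
            + (y i t - yN t) ⬝ᵥ (P' t) *ᵥ (y i t - yN t)
            + (y i t - yN t) ⬝ᵥ (P t) *ᵥ (A *ᵥ (y i t - yN t) + B *ᵥ (u i t - uN t))))
          + ((∑ i, (y i t - yN t) ⬝ᵥ Q *ᵥ (y i t - yN t))
            + ∑ i, (u i t - uN t) ⬝ᵥ R *ᵥ (u i t - uN t)) := by
      linarith [hkeysum, h3, h4]
    have h1 : ∑ i, Real.exp (-ρ * t) *
        ((u i t - uN t + (R⁻¹ * Bᵀ * P t) *ᵥ (y i t - yN t)) ⬝ᵥ
            R *ᵥ (u i t - uN t + (R⁻¹ * Bᵀ * P t) *ᵥ (y i t - yN t))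
          + (uN t + (R⁻¹ * Bᵀ * Pi t) *ᵥ yN t) ⬝ᵥ R *ᵥ (uN t + (R⁻¹ * Bᵀ * Pi t) *ᵥ yN t))
        = Real.exp (-ρ * t) *
          ((∑ i, (u i t - uN t + (R⁻¹ * Bᵀ * P t) *ᵥ (y i t - yN t)) ⬝ᵥ
              R *ᵥ (u i t - uN t + (R⁻¹ * Bᵀ * P t) *ᵥ (y i t - yN t)))
            + (N:ℝ) * ((uN t + (R⁻¹ * Bᵀ * Pi t) *ᵥ yN t) ⬝ᵥ
                R *ᵥ (uN t + (R⁻¹ * Bᵀ * Pi t) *ᵥ yN t))) := by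
      rw [← Finset.mul_sum]
      congr 1
      rw [Finset.sum_add_distrib, Finset.sum_const, Finset.card_univ, Fintype.card_fin,
        nsmul_eq_mul]
    have h2 : ∑ i, Real.exp (-ρ * t) *
        ((y i t - Γ *ᵥ yN t) ⬝ᵥ Q *ᵥ (y i t - Γ *ᵥ yN t) + u i t ⬝ᵥ R *ᵥ u i t)
        = Real.exp (-ρ * t) *
          ((∑ i, (y i t - Γ *ᵥ yN t) ⬝ᵥ Q *ᵥ (y i t - Γ *ᵥ yN t))
            + ∑ i, u i t ⬝ᵥ R *ᵥ u i t) := by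
      rw [← Finset.mul_sum]
      congr 1
      exact Finset.sum_add_distrib
    rw [h1, h2]
    linear_combination (-(Real.exp (-ρ * t))) * hSSA
      + Real.exp (-ρ * t) * horthQ + Real.exp (-ρ * t) * horthR
      + (N:ℝ) * Real.exp (-ρ * t) * havg
  -- FTC
  have hLc : Continuous fun t => ∑ i, Real.exp (-ρ * t) *
      ((y i t - Γ.mulVec (yN t)) ⬝ᵥ Q.mulVec (y i t - Γ.mulVec (yN t))
        + (u i t) ⬝ᵥ R.mulVec (u i t)) :=
    continuous_finset_sum _ fun i _ => hcl i
  have hRc : Continuous fun t => ∑ i, Real.exp (-ρ * t) *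
      ((u i t - uN t + (R⁻¹ * Bᵀ * P t).mulVec (y i t - yN t)) ⬝ᵥ
          R.mulVec (u i t - uN t + (R⁻¹ * Bᵀ * P t).mulVec (y i t - yN t))
        + (uN t + (R⁻¹ * Bᵀ * Pi t).mulVec (yN t)) ⬝ᵥ
          R.mulVec (uN t + (R⁻¹ * Bᵀ * Pi t).mulVec (yN t))) :=
    continuous_finset_sum _ fun i _ => hcr i
  have hI := intervalIntegral.integral_eq_sub_of_hasDerivAt (f := F)
    (fun t _ => hFd t) ((hRc.sub hLc).intervalIntegrable 0 T)
  have hFT : F T = 0 := by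
    rw [hFdef]; simp [hPT, hPiT]
  have hF0 : F 0 = 0 := by
    rw [hFdef]; simp [hy0, hyN0]
  rw [hFT, hF0, sub_zero] at hI
  have hsub := intervalIntegral.integral_sub (μ := MeasureTheory.volume) (hRc.intervalIntegrable 0 T)
    (hLc.intervalIntegrable 0 T)
  rw [hsub] at hI
  rw [← intervalIntegral.integral_finset_sum (fun i _ => ((hcl i).intervalIntegrable 0 T)),
    ← intervalIntegral.integral_finset_sum (fun i _ => ((hcr i).intervalIntegrable 0 T))]
  linarith [hI]
end

section
/- Necessity of stability from weighted integrability for all initial conditions: let M be a real n×n matrix and ρ > 0. If for every x₀ ∈ ℝⁿ the function x(t) = e^{Mt}x₀ satisfies ∫₀^∞ e^{−ρt}‖x(t)‖² dt < ∞, then M − (ρ/2)I is Hurwitz. -/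
open Matrix MeasureTheory

section Aux

attribute [local instance] Matrix.linftyOpNormedRing Matrix.linftyOpNormedAlgebra

variable {n : ℕ}

lemma exp_mulVec_eigen (A : Matrix (Fin n) (Fin n) ℂ) (v : Fin n → ℂ) (μ : ℂ)
    (hv : A.mulVec v = μ • v) :
    (NormedSpace.exp A).mulVec v = Complex.exp μ • v := by
  have hpow : ∀ k : ℕ, (A ^ k).mulVec v = (μ ^ k) • v := by
    intro k
    induction k with
    | zero => simp
    | succ k ih =>
      rw [pow_succ', ← Matrix.mulVec_mulVec, ih, Matrix.mulVec_smul, hv,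
        smul_smul, pow_succ', mul_comm]
  let L : Matrix (Fin n) (Fin n) ℂ →L[ℂ] (Fin n → ℂ) :=
    LinearMap.toContinuousLinearMap
      { toFun := fun B => B.mulVec v
        map_add' := fun B C => Matrix.add_mulVec B C v
        map_smul' := fun c B => Matrix.smul_mulVec c B v }
  have hL : ∀ B : Matrix (Fin n) (Fin n) ℂ, L B = B.mulVec v := fun _ => rfl
  have h1 : (NormedSpace.exp A).mulVec v = L (∑' k : ℕ, ((k.factorial : ℂ))⁻¹ • A ^ k) := by
    rw [NormedSpace.exp_eq_tsum ℂ]; rfl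
  rw [h1, L.map_tsum (NormedSpace.expSeries_summable' (𝕂 := ℂ) A)]
  have h2 : ∀ k : ℕ, L (((k.factorial : ℂ))⁻¹ • A ^ k) = (((k.factorial : ℂ))⁻¹ * μ ^ k) • v := by
    intro k
    rw [L.map_smul, hL, hpow, smul_smul]
  simp_rw [h2]
  rw [Summable.tsum_smul_const]
  · congr 1
    rw [Complex.exp_eq_exp_ℂ, NormedSpace.exp_eq_tsum ℂ]
    simp [smul_eq_mul]
  · have := NormedSpace.expSeries_summable' (𝕂 := ℂ) μ
    simpa [smul_eq_mul] using this

lemma exp_map_ofReal (B : Matrix (Fin n) (Fin n) ℝ) :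
    (NormedSpace.exp B).map Complex.ofReal = NormedSpace.exp (B.map Complex.ofReal) := by
  have hc : Continuous (fun A : Matrix (Fin n) (Fin n) ℝ =>
      (Complex.ofRealHom.mapMatrix : Matrix (Fin n) (Fin n) ℝ →+* Matrix (Fin n) (Fin n) ℂ) A) :=
    continuous_id.matrix_map Complex.continuous_ofReal
  have := NormedSpace.map_exp (Complex.ofRealHom.mapMatrix :
      Matrix (Fin n) (Fin n) ℝ →+* Matrix (Fin n) (Fin n) ℂ) hc B
  simp only [RingHom.mapMatrix_apply] at this
  rw [show (Complex.ofRealHom : ℝ →+* ℂ) = (Complex.ofReal : ℝ → ℂ) from rfl] at this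
  exact this

end Aux

theorem weighted_integrability_implies_hurwitz (n : ℕ) (ρ : ℝ) (hρ : 0 < ρ)
    (M : Matrix (Fin n) (Fin n) ℝ)
    (h : ∀ x₀ : Fin n → ℝ, IntegrableOn
        (fun t => Real.exp (-ρ * t) * ‖(NormedSpace.exp (t • M)).mulVec x₀‖^2)
        (Set.Ici 0)) :
    ∀ z ∈ spectrum ℂ
        ((M - (ρ/2) • (1 : Matrix (Fin n) (Fin n) ℝ)).map Complex.ofReal), z.re < 0 := by
  intro z hz
  by_contra hre
  push_neg at hre
  set A := (M - (ρ/2) • (1 : Matrix (Fin n) (Fin n) ℝ)).map Complex.ofReal with hAdef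
  -- obtain an eigenvector
  have hEig : Module.End.HasEigenvalue (Matrix.toLinAlgEquiv' A) z := by
    rw [Module.End.hasEigenvalue_iff_mem_spectrum, AlgEquiv.spectrum_eq Matrix.toLinAlgEquiv' A]
    exact hz
  obtain ⟨v, hv⟩ := hEig.exists_hasEigenvector
  have hvne : v ≠ 0 := hv.right
  have hAv : A.mulVec v = z • v := by
    have := hv.apply_eq_smul
    rwa [Matrix.toLinAlgEquiv'_apply] at this
  -- eigenvalue equation for M
  set μ : ℂ := z + (ρ/2 : ℝ) with hμdef
  have hμre : μ.re = z.re + ρ/2 := by simp [hμdef]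
  have hA : A = M.map Complex.ofReal - ((ρ/2 : ℝ) : ℂ) • 1 := by
    ext i j
    by_cases hij : i = j <;>
      simp [hAdef, Matrix.map_apply, Matrix.sub_apply, Matrix.smul_apply, Matrix.one_apply, hij]
  have hMc : (M.map Complex.ofReal).mulVec v = μ • v := by
    have h1 : A.mulVec v = (M.map Complex.ofReal).mulVec v - ((ρ/2 : ℝ) : ℂ) • v := by
      rw [hA, Matrix.sub_mulVec, Matrix.smul_mulVec, Matrix.one_mulVec]
    rw [h1] at hAv
    have := sub_eq_iff_eq_add.mp hAv
    rw [this, hμdef, add_smul]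
  -- exponential acting on eigenvector
  have key : ∀ t : ℝ, (NormedSpace.exp ((t • M).map Complex.ofReal)).mulVec v
      = Complex.exp ((t : ℂ) * μ) • v := by
    intro t
    apply exp_mulVec_eigen
    have hsm : (t • M).map Complex.ofReal = (t : ℂ) • (M.map Complex.ofReal) := by
      ext i j
      simp [Matrix.map_apply]
    rw [hsm, Matrix.smul_mulVec, hMc, smul_smul]
  set x₀ : Fin n → ℝ := fun j => (v j).re with hx₀
  set y₀ : Fin n → ℝ := fun j => (v j).im with hy₀
  -- componentwise real/imaginary parts
  have hcomp : ∀ (E : Matrix (Fin n) (Fin n) ℝ) (i : Fin n),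
      (((E.map Complex.ofReal).mulVec v) i).re = (E.mulVec x₀) i ∧
      (((E.map Complex.ofReal).mulVec v) i).im = (E.mulVec y₀) i := by
    intro E i
    constructor <;>
      simp [Matrix.mulVec, dotProduct, Complex.re_sum, Complex.im_sum, Matrix.map_apply,
        Complex.mul_re, Complex.mul_im, hx₀, hy₀]
  -- main pointwise bound
  have hnorm : ∀ t : ℝ, Real.exp (t * μ.re) * ‖v‖
      ≤ ‖(NormedSpace.exp (t • M)).mulVec x₀‖ + ‖(NormedSpace.exp (t • M)).mulVec y₀‖ := by
    intro t
    set E := NormedSpace.exp (t • M) with hE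
    have h1 : ((E.map Complex.ofReal).mulVec v) = Complex.exp ((t : ℂ) * μ) • v := by
      rw [hE, exp_map_ofReal, key]
    have h2 : ‖(E.map Complex.ofReal).mulVec v‖ = Real.exp (t * μ.re) * ‖v‖ := by
      rw [h1, norm_smul, Complex.norm_exp]
      congr 2
      simp
    rw [← h2]
    have hC : (0:ℝ) ≤ ‖E.mulVec x₀‖ + ‖E.mulVec y₀‖ := by positivity
    refine pi_norm_le_iff_of_nonneg hC |>.mpr fun i => ?_
    have h3 := hcomp E i
    calc ‖((E.map Complex.ofReal).mulVec v) i‖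
        ≤ |(((E.map Complex.ofReal).mulVec v) i).re| + |(((E.map Complex.ofReal).mulVec v) i).im| :=
          Complex.norm_le_abs_re_add_abs_im _
      _ = |(E.mulVec x₀) i| + |(E.mulVec y₀) i| := by rw [h3.1, h3.2]
      _ ≤ ‖E.mulVec x₀‖ + ‖E.mulVec y₀‖ := by
          gcongr
          · exact norm_le_pi_norm (E.mulVec x₀) i
          · exact norm_le_pi_norm (E.mulVec y₀) i
  -- integrability contradiction
  set c : ℝ := ‖v‖^2 with hc
  have hcpos : 0 < c := by
    have : 0 < ‖v‖ := norm_pos_iff.mpr hvne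
    positivity
  have hint : IntegrableOn (fun t =>
      2 * (Real.exp (-ρ * t) * ‖(NormedSpace.exp (t • M)).mulVec x₀‖^2
        + Real.exp (-ρ * t) * ‖(NormedSpace.exp (t • M)).mulVec y₀‖^2)) (Set.Ici 0) :=
    ((h x₀).add (h y₀)).const_mul 2
  have hdom : ∀ t ∈ Set.Ici (0:ℝ), ‖(fun _ : ℝ => c) t‖ ≤
      2 * (Real.exp (-ρ * t) * ‖(NormedSpace.exp (t • M)).mulVec x₀‖^2
        + Real.exp (-ρ * t) * ‖(NormedSpace.exp (t • M)).mulVec y₀‖^2) := by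
    intro t ht
    simp only [Set.mem_Ici] at ht
    set a := ‖(NormedSpace.exp (t • M)).mulVec x₀‖ with ha
    set b := ‖(NormedSpace.exp (t • M)).mulVec y₀‖ with hb
    have ha0 : 0 ≤ a := norm_nonneg _
    have hb0 : 0 ≤ b := norm_nonneg _
    have e1 : Real.exp (-ρ*t) * (Real.exp (t * μ.re))^2 = Real.exp (2*z.re*t) := by
      rw [sq, ← Real.exp_add, ← Real.exp_add]
      congr 1
      rw [hμre]; ring
    have e2 : (1:ℝ) ≤ Real.exp (2*z.re*t) :=
      Real.one_le_exp (by positivity)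
    have h3 : (Real.exp (t * μ.re) * ‖v‖)^2 ≤ (a + b)^2 :=
      pow_le_pow_left₀ (by positivity) (hnorm t) 2
    have h4 : (a + b)^2 ≤ 2*(a^2 + b^2) := by nlinarith [sq_nonneg (a - b)]
    have hexp0 : (0:ℝ) < Real.exp (-ρ*t) := Real.exp_pos _
    have hnc : ‖(fun _ : ℝ => c) t‖ = c := by
      simp [Real.norm_eq_abs, abs_of_nonneg hcpos.le]
    rw [hnc]
    calc c ≤ Real.exp (2*z.re*t) * c := le_mul_of_one_le_left hcpos.le e2
      _ = Real.exp (-ρ*t) * (Real.exp (t * μ.re) * ‖v‖)^2 := by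
          rw [mul_pow, ← mul_assoc, e1, hc]
      _ ≤ Real.exp (-ρ*t) * (2*(a^2 + b^2)) := by
          have := h3.trans h4
          exact mul_le_mul_of_nonneg_left this hexp0.le
      _ = 2 * (Real.exp (-ρ * t) * a^2 + Real.exp (-ρ * t) * b^2) := by ring
  have hconst : IntegrableOn (fun _ : ℝ => c) (Set.Ici 0) volume :=
    Integrable.mono' hint aestronglyMeasurable_const
      ((ae_restrict_iff' measurableSet_Ici).mpr (ae_of_all _ hdom))
  rw [integrableOn_const_iff] at hconst
  rcases hconst with h1 | h1
  · exact hcpos.ne' (enorm_eq_zero.mp h1)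
  · rw [Real.volume_Ici] at h1
    exact (lt_irrefl _ h1).elim
end
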